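/- Let d ≥ 2, let s : {1,...,d} → ℝ satisfy s_1 = 1, s strictly increasing with nonincreasing increments, and suppose s_{i+1}/(i+1) < λ < s_i/i for some i ∈ {1,...,d−1}. Define y*_i = (1/i)·(λ − s_{i+1}/(i+1)) / (s_i/i − s_{i+1}/(i+1)), y*_{i+1} = (1/(i+1))·(s_i/i − λ) / (s_i/i − s_{i+1}/(i+1)), and y*_j = 0 for j ∉ {i, i+1}. Then y* is feasible for the problem minimize Σ y_j subject to Σ s_j y_j = λ, Σ j·y_j ≤ 1, y ≥ 0; moreover y*_i > 0, y*_{i+1} > 0, Σ_j s_j y*_j = λ, and Σ_j j·y*_j = 1. -/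

import Mathlib

/-- The explicit two-component candidate is feasible, with strictly positive
components, and satisfies both linear equations exactly. -/
theorem stmt_5 (d : ℕ) (hd : 2 ≤ d) (s : ℕ → ℝ) (hs0 : s 0 = 0) (hs1 : s 1 = 1)
    (hmono : ∀ j, j < d → s j < s (j + 1))
    (hconc : ∀ j, 1 ≤ j → j + 1 ≤ d → s (j + 1) - s j ≤ s j - s (j - 1))
    (lam : ℝ) (i : ℕ) (hi1 : 1 ≤ i) (hid : i + 1 ≤ d)
    (hlo : s (i + 1) / ((i : ℝ) + 1) < lam) (hhi : lam < s i / (i : ℝ))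
    (ystar : ℕ → ℝ)
    (hyi : ystar i = (1 / (i : ℝ)) * (lam - s (i + 1) / ((i : ℝ) + 1)) /
      (s i / (i : ℝ) - s (i + 1) / ((i : ℝ) + 1)))
    (hyi1 : ystar (i + 1) = (1 / ((i : ℝ) + 1)) * (s i / (i : ℝ) - lam) /
      (s i / (i : ℝ) - s (i + 1) / ((i : ℝ) + 1)))
    (hy0 : ∀ j, j ≠ i → j ≠ i + 1 → ystar j = 0) :
    0 < ystar i ∧ 0 < ystar (i + 1) ∧
    (∀ j ∈ Finset.Icc 1 d, 0 ≤ ystar j) ∧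
    (∑ j ∈ Finset.Icc 1 d, s j * ystar j) = lam ∧
    (∑ j ∈ Finset.Icc 1 d, (j : ℝ) * ystar j) = 1 := by
  have hipos : (0 : ℝ) < (i : ℝ) := by exact_mod_cast hi1
  have hi1pos : (0 : ℝ) < (i : ℝ) + 1 := by linarith
  have hD : (0 : ℝ) < s i / (i : ℝ) - s (i + 1) / ((i : ℝ) + 1) := by linarith
  have hyipos : 0 < ystar i := by
    rw [hyi]
    exact div_pos (mul_pos (by positivity) (by linarith)) hD
  have hyi1pos : 0 < ystar (i + 1) := by
    rw [hyi1]
    exact div_pos (mul_pos (by positivity) (by linarith)) hD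
  have hine : (i:ℝ) ≠ 0 := ne_of_gt hipos
  have h1ne : (i:ℝ) + 1 ≠ 0 := ne_of_gt hi1pos
  have hDne : s i / (i : ℝ) - s (i + 1) / ((i : ℝ) + 1) ≠ 0 := ne_of_gt hD
  have hsub : ({i, i + 1} : Finset ℕ) ⊆ Finset.Icc 1 d := by
    intro x hx
    simp only [Finset.mem_insert, Finset.mem_singleton] at hx
    rcases hx with rfl | rfl <;> rw [Finset.mem_Icc] <;> omega
  have e1 : s i * ystar i + s (i + 1) * ystar (i + 1) = lam := by
    rw [hyi, hyi1, mul_div_assoc', mul_div_assoc', ← add_div, div_eq_iff hDne]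
    field_simp
    ring
  have e2 : (i : ℝ) * ystar i + ((i : ℝ) + 1) * ystar (i + 1) = 1 := by
    rw [hyi, hyi1, mul_div_assoc', mul_div_assoc', ← add_div, div_eq_iff hDne]
    field_simp
    ring
  have key : ∀ f : ℕ → ℝ, (∑ j ∈ Finset.Icc 1 d, f j * ystar j)
      = f i * ystar i + f (i + 1) * ystar (i + 1) := by
    intro f
    rw [← Finset.sum_subset hsub (by
      intro x _ hx
      simp only [Finset.mem_insert, Finset.mem_singleton, not_or] at hx
      rw [hy0 x hx.1 hx.2, mul_zero])]
    rw [Finset.sum_pair (by omega)]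
  refine ⟨hyipos, hyi1pos, ?_, ?_, ?_⟩
  · intro j _
    rcases eq_or_ne j i with rfl | h1
    · exact hyipos.le
    rcases eq_or_ne j (i + 1) with rfl | h2
    · exact hyi1pos.le
    · rw [hy0 j h1 h2]
  · rw [key s]; exact e1
  · rw [key (fun j => (j : ℝ))]
    push_cast
    exact e2
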